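/- Let τ : ℝ² → ℝ be a bounded measurable symmetric function and ρ : ℝ → ℝ a nonnegative integrable function with compact support. For s ∈ ℝ define ζ_s : ℝ → ℝ by ζ_s(y) := ∫₁^∞ ((r−1)/r²) τ(s, s + r(y−s)) ρ(s + r(y−s)) dr. Then for every s ∈ ℝ and every C² function φ : ℝ → ℂ with bounded second derivative, the functional Ξ_s(φ) := ∫_ℝ τ(s,t) ρ(t) (φ(t) − φ(s) − (t−s)φ'(s))/(t−s)² dt satisfies Ξ_s(φ) = ∫_ℝ φ''(y) ζ_s(y) dy. -/

import Mathlib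

open MeasureTheory

/-- The functional `Ξ_s(φ) := ∫_ℝ τ(s,t) ρ(t) (φ(t) − φ(s) − (t−s)φ'(s))/(t−s)² dt`. -/
noncomputable def Xi (τ : ℝ → ℝ → ℝ) (ρ : ℝ → ℝ) (s : ℝ) (φ : ℝ → ℂ) : ℂ :=
  ∫ t : ℝ, ((τ s t * ρ t : ℝ) : ℂ) *
      ((φ t - φ s - ((t : ℂ) - (s : ℂ)) * deriv φ s) / (((t : ℂ) - (s : ℂ)) ^ 2))

/-- `ζ_s(y) := ∫₁^∞ ((r−1)/r²) τ(s, s + r(y−s)) ρ(s + r(y−s)) dr`. -/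
noncomputable def zeta (τ : ℝ → ℝ → ℝ) (ρ : ℝ → ℝ) (s : ℝ) (y : ℝ) : ℝ :=
  ∫ r in Set.Ioi (1 : ℝ), ((r - 1) / r ^ 2) * τ s (s + r * (y - s)) * ρ (s + r * (y - s))

lemma aux_taylor (φ : ℝ → ℂ) (hφ : ContDiff ℝ 2 φ) (s t : ℝ) (hts : t ≠ s) :
    (φ t - φ s - ((t : ℂ) - (s : ℂ)) * deriv φ s) / (((t : ℂ) - (s : ℂ)) ^ 2)
      = ∫ u in Set.Ioo (0:ℝ) 1, ((1 - u : ℝ) : ℂ) * iteratedDeriv 2 φ (s + u*(t-s)) := by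
  have hφ1 : Differentiable ℝ φ := hφ.differentiable (by norm_num)
  have hφd : ContDiff ℝ 1 (deriv φ) := by
    have := (contDiff_succ_iff_deriv (n := 1)).mp (by exact_mod_cast hφ)
    exact this.2.2
  have hφ2 : iteratedDeriv 2 φ = deriv (deriv φ) := by
    rw [iteratedDeriv_succ, iteratedDeriv_one]
  set a := t - s with ha
  set Φ : ℝ → ℂ := fun u => φ (s + u*a) + ((1-u)*a : ℝ) • deriv φ (s + u*a) with hΦ
  have key : ∀ u : ℝ, HasDerivAt Φ (((1 - u : ℝ):ℂ) * (((a^2 : ℝ)):ℂ) * iteratedDeriv 2 φ (s + u*a)) u := by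
    intro u
    have hl : HasDerivAt (fun u : ℝ => s + u*a) a u := by
      simpa using ((hasDerivAt_id u).mul_const a).const_add s
    have h1 : HasDerivAt (fun u : ℝ => φ (s + u*a)) (a • deriv φ (s + u*a)) u :=
      (hφ1 _).hasDerivAt.scomp u hl
    have h2 : HasDerivAt (fun u : ℝ => deriv φ (s + u*a)) (a • deriv (deriv φ) (s + u*a)) u :=
      ((hφd.differentiable one_ne_zero) _).hasDerivAt.scomp u hl
    have hc : HasDerivAt (fun u : ℝ => ((1-u)*a : ℝ)) (-a) u := by
      simpa using (((hasDerivAt_id u).const_sub 1).mul_const a)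
    have h3 := h1.add (hc.smul h2)
    convert h3 using 1
    · rfl
    · rfl
    rw [hφ2]
    push_cast
    simp [smul_eq_mul]
    ring
  have hcont : Continuous fun u : ℝ => ((1 - u : ℝ):ℂ) * (((a^2 : ℝ)):ℂ) * iteratedDeriv 2 φ (s + u*a) := by
    have : Continuous (iteratedDeriv 2 φ) := by
      rw [hφ2]; exact hφd.continuous_deriv le_rfl
    fun_prop
  have hFTC := intervalIntegral.integral_eq_sub_of_hasDerivAt (f := Φ)
      (fun u _ => key u) (hcont.intervalIntegrable 0 1)
  have hmain : φ t - φ s - ((a : ℝ) : ℂ) * deriv φ s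
      = ∫ u in (0:ℝ)..1, ((1 - u : ℝ) : ℂ) * (((a^2 : ℝ)):ℂ) * iteratedDeriv 2 φ (s + u*a) := by
    rw [hFTC]
    have hta : s + a = t := by rw [ha]; ring
    simp only [hΦ]
    norm_num [hta]
    ring
  have hA : ((t : ℂ) - (s : ℂ)) = ((a : ℝ) : ℂ) := by rw [ha]; push_cast; ring
  have hA0 : ((a : ℝ) : ℂ) ≠ 0 := by
    simp only [ne_eq, Complex.ofReal_eq_zero, ha, sub_eq_zero]; exact hts
  rw [hA, hmain]
  have hre : ∀ u : ℝ, ((1 - u : ℝ) : ℂ) * (((a^2 : ℝ)):ℂ) * iteratedDeriv 2 φ (s + u*a)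
      = ((a:ℝ):ℂ)^2 * (((1 - u : ℝ) : ℂ) * iteratedDeriv 2 φ (s + u*a)) := by
    intro u; push_cast; ring
  simp_rw [hre]
  rw [intervalIntegral.integral_const_mul, intervalIntegral.integral_of_le zero_le_one,
    MeasureTheory.integral_Ioc_eq_integral_Ioo]
  field_simp
  simp only [mul_comm a]

theorem key (τ : ℝ → ℝ → ℝ) (hτ_meas : Measurable (Function.uncurry τ)) (Cτ : ℝ)
    (hCτ : ∀ a b, |τ a b| ≤ Cτ) (ρ : ℝ → ℝ) (hρ_meas : Measurable ρ) (hρ_int : Integrable ρ)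
    (s : ℝ) (φ : ℝ → ℂ) (hφ : ContDiff ℝ 2 φ) (Cφ : ℝ)
    (hCφ : ∀ y, ‖iteratedDeriv 2 φ y‖ ≤ Cφ) :
    Xi τ ρ s φ = ∫ y : ℝ, iteratedDeriv 2 φ y * ((zeta τ ρ s y : ℝ) : ℂ) := by
  have hCτ0 : 0 ≤ Cτ := le_trans (abs_nonneg _) (hCτ 0 0)
  have hCφ0 : 0 ≤ Cφ := le_trans (norm_nonneg _) (hCφ 0)
  set φ₂ : ℝ → ℂ := iteratedDeriv 2 φ with hφ₂
  have hφ₂c : Continuous φ₂ := by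
    rw [hφ₂, iteratedDeriv_succ, iteratedDeriv_one]
    have := (contDiff_succ_iff_deriv (n := 1)).mp (by exact_mod_cast hφ)
    exact this.2.2.continuous_deriv le_rfl
  have hτs : Measurable (fun t : ℝ => τ s t) :=
    hτ_meas.comp (measurable_const.prodMk measurable_id)
  -- the measure on the u-variable
  set ν : Measure ℝ := volume.restrict (Set.Ioo (0:ℝ) 1) with hν
  haveI : IsFiniteMeasure ν := by
    constructor
    rw [hν, Measure.restrict_apply_univ, Real.volume_Ioo]
    norm_num
  set F : ℝ → ℝ → ℂ := fun t u => ((τ s t * ρ t * (1-u) : ℝ) : ℂ) * φ₂ (s + u*(t-s)) with hF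
  -- Step 1 : rewrite Xi
  have step1 : Xi τ ρ s φ = ∫ t : ℝ, ∫ u, F t u ∂ν := by
    rw [Xi]
    apply integral_congr_ae
    have hae : ∀ᵐ t : ℝ, t ≠ s := by
      refine (ae_iff).mpr ?_
      have h : {t : ℝ | ¬t ≠ s} = {s} := by ext t; simp
      rw [h]; exact measure_singleton s
    filter_upwards [hae] with t ht
    rw [aux_taylor φ hφ s t ht, ← integral_const_mul]
    refine integral_congr_ae (Filter.Eventually.of_forall fun u => ?_)
    rw [hF]
    push_cast
    ring
  -- Step 2 : product integrability of F
  have hFmeas : AEStronglyMeasurable (Function.uncurry F) ((volume : Measure ℝ).prod ν) := by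
    apply Measurable.aestronglyMeasurable
    apply Measurable.mul
    · apply Complex.measurable_ofReal.comp
      exact ((hτs.comp measurable_fst).mul (hρ_meas.comp measurable_fst)).mul (by fun_prop)
    · exact hφ₂c.measurable.comp (by fun_prop)
  have hFint : Integrable (Function.uncurry F) ((volume : Measure ℝ).prod ν) := by
    refine Integrable.mono' (g := fun p : ℝ × ℝ => (Cτ * Cφ * |ρ p.1|) * |1 - p.2|) ?_ hFmeas ?_
    · exact (hρ_int.norm.const_mul (Cτ * Cφ)).mul_prod
        ((continuous_const.sub continuous_id).abs.integrableOn_Icc.mono_set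
          Set.Ioo_subset_Icc_self : Integrable (fun u : ℝ => |1 - u|) ν)
    · refine Filter.Eventually.of_forall fun p => ?_
      rw [hF]
      simp only [Function.uncurry, norm_mul, Complex.norm_real, Real.norm_eq_abs, abs_mul]
      calc |τ s p.1| * |ρ p.1| * |1 - p.2| * ‖φ₂ (s + p.2 * (p.1 - s))‖
            ≤ Cτ * |ρ p.1| * |1 - p.2| * Cφ := by
              gcongr <;> first | positivity | exact hCτ _ _ | exact hCφ _
        _ = Cτ * Cφ * |ρ p.1| * |1 - p.2| := by ring
  have swap1 : (∫ t : ℝ, ∫ u, F t u ∂ν) = ∫ u, (∫ t : ℝ, F t u) ∂ν :=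
    integral_integral_swap hFint
  set G : ℝ → ℝ → ℂ := fun u x =>
    φ₂ x * ((τ s (s + (x - s)/u) * ρ (s + (x - s)/u) : ℝ) : ℂ) with hG
  set K : ℝ → ℝ → ℂ := fun u y => (((1-u)/u : ℝ) : ℂ) * G u y with hK
  have step4 : ∀ u ∈ Set.Ioo (0:ℝ) 1, (∫ t : ℝ, F t u) = ∫ y : ℝ, K u y := by
    intro u hu
    have hu0 : 0 < u := hu.1
    have hrw : (fun t : ℝ => F t u)
        = fun t : ℝ => ((1-u : ℝ) : ℂ) * (fun x => G u (x + (s - u*s))) (u * t) := by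
      funext t
      simp only [hF, hG]
      have e1 : u*t + (s - u*s) = s + u*(t-s) := by ring
      rw [e1]
      have e2 : (s + u*(t-s) - s)/u = t - s := by field_simp; ring
      rw [e2]
      push_cast
      ring
    rw [hrw, MeasureTheory.integral_const_mul,
      Measure.integral_comp_mul_left (fun x => G u (x + (s - u*s))) u,
      integral_add_right_eq_self (fun x => G u x) (s - u*s)]
    rw [abs_of_pos (inv_pos.mpr hu0)]
    simp only [hK]
    rw [MeasureTheory.integral_const_mul, Complex.real_smul]
    push_cast
    ring
  have hKmeas : AEStronglyMeasurable (Function.uncurry K) (ν.prod volume) := by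
    apply Measurable.aestronglyMeasurable
    apply Measurable.mul
    · exact Complex.measurable_ofReal.comp (by fun_prop)
    · apply Measurable.mul
      · exact hφ₂c.measurable.comp measurable_snd
      · apply Complex.measurable_ofReal.comp
        apply Measurable.mul
        · exact hτs.comp (by fun_prop)
        · exact hρ_meas.comp (by fun_prop)
  have e_int : ∀ u : ℝ, 0 < u → Integrable (fun y : ℝ => ρ (s + (y - s)/u)) := by
    intro u hu0
    have h : (fun y : ℝ => ρ (s + (y - s)/u))
        = fun y => (fun x => ρ (x + (s - u⁻¹*s))) (u⁻¹ * y) := by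
      funext y; congr 1; field_simp; ring
    rw [h]
    exact (hρ_int.comp_add_right (s - u⁻¹*s)).comp_mul_left' (inv_ne_zero hu0.ne')
  have P_int : ∀ u : ℝ, 0 < u →
      Integrable (fun y : ℝ => τ s (s + (y - s)/u) * ρ (s + (y - s)/u)) := by
    intro u hu0
    refine ((e_int u hu0).norm.const_mul Cτ).mono' ?_ ?_
    · exact ((hτs.comp (by fun_prop : Measurable fun y : ℝ => s + (y - s)/u)).mul
        (hρ_meas.comp (by fun_prop))).aestronglyMeasurable
    · refine Filter.Eventually.of_forall fun y => ?_
      simp only [Real.norm_eq_abs, abs_mul]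
      gcongr
      exact hCτ _ _
  have G_int : ∀ u : ℝ, 0 < u → Integrable (G u) := by
    intro u hu0
    simp only [hG]
    exact Integrable.bdd_mul ((P_int u hu0).ofReal) hφ₂c.aestronglyMeasurable
      (Filter.Eventually.of_forall hCφ)
  have hIρ : 0 ≤ ∫ x : ℝ, |ρ x| := integral_nonneg fun x => abs_nonneg _
  have habs_int : ∀ u : ℝ, 0 < u →
      (∫ y : ℝ, |ρ (s + (y - s)/u)|) = u * ∫ x : ℝ, |ρ x| := by
    intro u hu0
    have h : (fun y : ℝ => |ρ (s + (y - s)/u)|)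
        = fun y => (fun x => |ρ (x + (s - u⁻¹*s))|) (u⁻¹ * y) := by
      funext y; congr 2; field_simp; ring
    rw [h, Measure.integral_comp_mul_left (fun x => |ρ (x + (s - u⁻¹*s))|) u⁻¹,
      integral_add_right_eq_self (fun x => |ρ x|) (s - u⁻¹*s), inv_inv,
      abs_of_pos hu0, smul_eq_mul]
  have hKint : Integrable (Function.uncurry K) (ν.prod volume) := by
    refine (integrable_prod_iff hKmeas).mpr ⟨?_, ?_⟩
    · filter_upwards [ae_restrict_mem measurableSet_Ioo] with u hu
      simpa only [Function.uncurry] using (G_int u hu.1).const_mul ((((1-u)/u : ℝ)) : ℂ)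
    · refine Integrable.mono' (integrable_const (Cτ * Cφ * ∫ x : ℝ, |ρ x|))
        hKmeas.norm.integral_prod_right' ?_
      filter_upwards [ae_restrict_mem measurableSet_Ioo] with u hu
      simp only [Function.uncurry]
      have hu0 : 0 < u := hu.1
      have hu1 : u < 1 := hu.2
      have hnn : 0 ≤ ∫ y : ℝ, ‖K u y‖ := integral_nonneg fun y => norm_nonneg _
      rw [Real.norm_eq_abs, abs_of_nonneg hnn]
      have hb : ∀ y : ℝ, ‖K u y‖ ≤ ((1-u)/u * (Cτ * Cφ)) * |ρ (s + (y - s)/u)| := by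
        intro y
        simp only [hK, hG, norm_mul, Complex.norm_real, Real.norm_eq_abs, abs_mul]
        rw [abs_of_nonneg (div_nonneg (by linarith) hu0.le)]
        calc (1-u)/u * (‖φ₂ y‖ * (|τ s (s+(y-s)/u)| * |ρ (s+(y-s)/u)|))
            ≤ (1-u)/u * (Cφ * (Cτ * |ρ (s+(y-s)/u)|)) := by
              gcongr <;> first | positivity | exact hCφ y | exact hCτ _ _ | exact div_nonneg (by linarith) hu0.le | linarith
          _ = ((1-u)/u * (Cτ*Cφ)) * |ρ (s+(y-s)/u)| := by ring
      have hle : (∫ y : ℝ, ‖K u y‖)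
          ≤ ∫ y : ℝ, ((1-u)/u * (Cτ*Cφ)) * |ρ (s + (y-s)/u)| := by
        refine integral_mono_of_nonneg (Filter.Eventually.of_forall fun y => norm_nonneg _)
          (((e_int u hu0).abs).const_mul _) (Filter.Eventually.of_forall hb)
      refine le_trans hle ?_
      rw [MeasureTheory.integral_const_mul, habs_int u hu0]
      have heq : (1-u)/u * (Cτ*Cφ) * (u * ∫ x : ℝ, |ρ x|)
          = (1-u) * (Cτ*Cφ * ∫ x : ℝ, |ρ x|) := by
        field_simp
      rw [heq]
      nlinarith [mul_nonneg (mul_nonneg hCτ0 hCφ0) hIρ]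
  have step45 : (∫ u, (∫ t : ℝ, F t u) ∂ν) = ∫ u, (∫ y : ℝ, K u y) ∂ν := by
    refine integral_congr_ae ?_
    filter_upwards [ae_restrict_mem measurableSet_Ioo] with u hu using step4 u hu
  have swap2 : (∫ u, (∫ y : ℝ, K u y) ∂ν) = ∫ y : ℝ, ∫ u, K u y ∂ν :=
    integral_integral_swap hKint
  have step7 : ∀ y : ℝ, (∫ u, K u y ∂ν) = φ₂ y * ((zeta τ ρ s y : ℝ) : ℂ) := by
    intro y
    have h1 : ∀ u : ℝ, K u y
        = φ₂ y * ((((1-u)/u) * (τ s (s + (y - s)/u) * ρ (s + (y - s)/u)) : ℝ) : ℂ) := by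
      intro u; simp only [hK, hG]; push_cast; ring
    have hreal : (∫ u, ((1-u)/u) * (τ s (s + (y - s)/u) * ρ (s + (y - s)/u)) ∂ν)
        = zeta τ ρ s y := by
      rw [zeta, hν]
      have himg : (fun r : ℝ => r⁻¹) '' Set.Ioi 1 = Set.Ioo 0 1 := by
        ext x
        simp only [Set.mem_image, Set.mem_Ioi, Set.mem_Ioo]
        constructor
        · rintro ⟨r, hr, rfl⟩
          exact ⟨inv_pos.mpr (lt_trans one_pos hr), inv_lt_one_of_one_lt₀ hr⟩
        · rintro ⟨h0, h1⟩
          exact ⟨x⁻¹, (one_lt_inv₀ h0).mpr h1, inv_inv x⟩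
      have hder : ∀ r ∈ Set.Ioi (1:ℝ), HasDerivWithinAt (fun x : ℝ => x⁻¹) (-(r^2)⁻¹)
          (Set.Ioi 1) r := fun r hr =>
        (hasDerivAt_inv (lt_trans one_pos hr).ne').hasDerivWithinAt
      have hinj : Set.InjOn (fun x : ℝ => x⁻¹) (Set.Ioi 1) := fun a _ b _ h => inv_injective h
      have hcv := integral_image_eq_integral_abs_deriv_smul measurableSet_Ioi hder hinj
        (fun v => ((1-v)/v) * (τ s (s + (y - s)/v) * ρ (s + (y - s)/v)))
      rw [himg] at hcv
      rw [hcv]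
      refine setIntegral_congr_fun measurableSet_Ioi ?_
      intro r hr
      have hr1 : (1:ℝ) < r := hr
      have hr0 : (0:ℝ) < r := lt_trans one_pos hr1
      have harg : s + (y - s)/r⁻¹ = s + r*(y-s) := by field_simp
      simp only [smul_eq_mul, harg]
      rw [abs_neg, abs_inv, abs_pow, abs_of_pos hr0]
      field_simp
    simp_rw [h1]
    rw [MeasureTheory.integral_const_mul]
    congr 1
    rw [← hreal]
    exact integral_ofReal
  rw [step1, swap1, step45, swap2]
  exact integral_congr_ae (Filter.Eventually.of_forall fun y => step7 y)

/-- **Rewriting of the functional Ξ_s (Proposition `propo:rewritingFunctional`).**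
For τ bounded measurable symmetric, ρ ≥ 0 integrable with compact support, s ∈ ℝ and any
C² function φ : ℝ → ℂ with bounded second derivative, `Ξ_s(φ) = ∫_ℝ φ''(y) ζ_s(y) dy`. -/
theorem Xi_eq_integral_second_deriv_mul_zeta
    (τ : ℝ → ℝ → ℝ) (hτ_meas : Measurable (Function.uncurry τ))
    (hτ_bdd : ∃ C, ∀ s t, |τ s t| ≤ C) (hτ_symm : ∀ s t, τ s t = τ t s)
    (ρ : ℝ → ℝ) (hρ_nonneg : ∀ t, 0 ≤ ρ t) (hρ_int : Integrable ρ)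
    (hρ_supp : HasCompactSupport ρ)
    (s : ℝ) (φ : ℝ → ℂ) (hφ : ContDiff ℝ 2 φ)
    (hφ'' : ∃ C, ∀ y, ‖iteratedDeriv 2 φ y‖ ≤ C) :
    Xi τ ρ s φ = ∫ y : ℝ, iteratedDeriv 2 φ y * ((zeta τ ρ s y : ℝ) : ℂ) := by
  obtain ⟨Cτ, hCτ⟩ := hτ_bdd
  obtain ⟨Cφ, hCφ⟩ := hφ''
  set ρ' : ℝ → ℝ := hρ_int.1.mk ρ with hρ'
  have hρ'_meas : Measurable ρ' := hρ_int.1.stronglyMeasurable_mk.measurable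
  have hmeq : ρ =ᵐ[volume] ρ' := hρ_int.1.ae_eq_mk
  have hρ'_int : Integrable ρ' := hρ_int.congr hmeq
  have h1 : Xi τ ρ s φ = Xi τ ρ' s φ := by
    rw [Xi, Xi]
    refine integral_congr_ae ?_
    filter_upwards [hmeq] with t ht
    rw [ht]
  have h2 : ∀ y : ℝ, y ≠ s → zeta τ ρ s y = zeta τ ρ' s y := by
    intro y hy
    rw [zeta, zeta]
    refine integral_congr_ae (ae_restrict_of_ae ?_)
    have hys : y - s ≠ 0 := sub_ne_zero.mpr hy
    have hnull : volume {x : ℝ | ¬ ρ x = ρ' x} = 0 := ae_iff.mp hmeq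
    have hae2 : ∀ᵐ r : ℝ, ρ (s + r * (y - s)) = ρ' (s + r * (y - s)) := by
      refine ae_iff.mpr ?_
      have hpre : {r : ℝ | ¬ ρ (s + r*(y-s)) = ρ' (s + r*(y-s))}
          = (fun r : ℝ => r * (y-s)) ⁻¹' ((fun x : ℝ => s + x) ⁻¹' {x | ¬ ρ x = ρ' x}) := by
        ext r; simp [Set.mem_preimage]
      rw [hpre, Real.volume_preimage_mul_right hys, measure_preimage_add, hnull, mul_zero]
    filter_upwards [hae2] with r hr
    rw [hr]
  have h3 : (∫ y : ℝ, iteratedDeriv 2 φ y * ((zeta τ ρ s y : ℝ) : ℂ))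
      = ∫ y : ℝ, iteratedDeriv 2 φ y * ((zeta τ ρ' s y : ℝ) : ℂ) := by
    refine integral_congr_ae ?_
    have hae : ∀ᵐ y : ℝ, y ≠ s := by
      refine ae_iff.mpr ?_
      have h : {y : ℝ | ¬y ≠ s} = {s} := by ext y; simp
      rw [h]; exact measure_singleton s
    filter_upwards [hae] with y hy
    rw [h2 y hy]
  rw [h1, h3]
  exact key τ hτ_meas Cτ hCτ ρ' hρ'_meas hρ'_int s φ hφ Cφ hCφ
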